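/- For every prime p and integer d ≥ 1, the minrank over F_p of the graph G_2(d,p) on the self-orthogonal vectors of F_p^d (distinct vertices adjacent iff not orthogonal) is at least n / (C(d+p-2, p-1) + 1), where n is the number of self-orthogonal vectors in F_p^d. -/

import Mathlib

/-- A matrix `M` over a field `F` represents a simple graph `G` if all diagonal entries are
nonzero and entries at distinct non-adjacent pairs of vertices are zero. -/
def Represents {V F : Type*} [Field F] (G : SimpleGraph V) (M : Matrix V V F) : Prop :=
  (∀ v, M v v ≠ 0) ∧ ∀ u v : V, u ≠ v → ¬G.Adj u v → M u v = 0

/-- The minrank of a simple graph `G` over a field `F`. -/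
noncomputable def minrank (F : Type*) [Field F] {V : Type*} [Fintype V] [DecidableEq V]
    (G : SimpleGraph V) : ℕ :=
  sInf {r : ℕ | ∃ M : Matrix V V F, Represents G M ∧ M.rank = r}

/-- The graph `G₂(d, p)`: vertices are the self-orthogonal vectors of `F_p^d`, with two
distinct vertices adjacent iff they are not orthogonal. -/
def selfOrthoGraph (d p : ℕ) : SimpleGraph {v : Fin d → ZMod p // ∑ i, v i * v i = 0} where
  Adj u v := u ≠ v ∧ ∑ i, u.1 i * v.1 i ≠ 0
  symm := ⟨fun u v h => ⟨h.1.symm, by simpa [mul_comm] using h.2⟩⟩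
  loopless := ⟨fun v h => h.1 rfl⟩

open Finset Matrix

/-- Rank of a sum of two matrices is subadditive. -/
lemma matrix_rank_add_le {F m n : Type*} [Field F] [Fintype m] [Fintype n]
    (A B : Matrix m n F) : (A + B).rank ≤ A.rank + B.rank := by
  classical
  rw [Matrix.rank, Matrix.rank, Matrix.rank, Matrix.mulVecLin_add]
  have h : LinearMap.range (A.mulVecLin + B.mulVecLin) ≤
      LinearMap.range A.mulVecLin ⊔ LinearMap.range B.mulVecLin := by
    rintro x ⟨y, rfl⟩
    exact Submodule.mem_sup.2 ⟨_, ⟨y, rfl⟩, _, ⟨y, rfl⟩, rfl⟩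
  exact (Submodule.finrank_mono h).trans
    (Submodule.finrank_add_le_finrank_add_finrank _ _)

lemma matrix_rank_sum_le {F m n ι : Type*} [Field F] [Fintype m] [Fintype n]
    (s : Finset ι) (f : ι → Matrix m n F) :
    (∑ i ∈ s, f i).rank ≤ ∑ i ∈ s, (f i).rank := by
  classical
  induction s using Finset.cons_induction with
  | empty => simp
  | cons a s ha ih =>
    rw [Finset.sum_cons, Finset.sum_cons]
    exact (matrix_rank_add_le _ _).trans (by gcongr)

/-- Expansion of a power of an inner product as a bilinear sum over `Sym α k`. -/
lemma sym_expand {α F : Type*} [Fintype α] [DecidableEq α] [CommRing F] (k : ℕ) :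
    ∃ c : Sym α k → F, ∀ u v : α → F,
      (∑ i, u i * v i) ^ k =
        ∑ m : Sym α k,
          c m * (((m : Multiset α).map u).prod * ((m : Multiset α).map v).prod) := by
  classical
  set symOf : (Fin k → α) → Sym α k := fun g =>
    ⟨Multiset.map g Finset.univ.val, by simp⟩ with hsymOf
  refine ⟨fun m => ((Finset.univ.filter fun g : Fin k → α => symOf g = m).card : F), ?_⟩
  intro u v
  rw [Fintype.sum_pow]
  have key : ∀ g : Fin k → α, ∏ i, (u (g i) * v (g i)) =
      (((symOf g : Multiset α)).map u).prod * (((symOf g : Multiset α)).map v).prod := by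
    intro g
    show _ = (Multiset.map u (Multiset.map g Finset.univ.val)).prod *
      (Multiset.map v (Multiset.map g Finset.univ.val)).prod
    rw [Finset.prod_mul_distrib, Multiset.map_map, Multiset.map_map,
      Finset.prod_eq_multiset_prod, Finset.prod_eq_multiset_prod]
    rfl
  calc ∑ g : Fin k → α, ∏ i, (u (g i) * v (g i))
      = ∑ g : Fin k → α,
          ((((symOf g : Multiset α)).map u).prod * (((symOf g : Multiset α)).map v).prod) := by
        exact Finset.sum_congr rfl fun g _ => key g
    _ = ∑ m : Sym α k, ∑ g ∈ Finset.univ.filter fun g : Fin k → α => symOf g = m,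
          ((((m : Multiset α)).map u).prod * (((m : Multiset α)).map v).prod) := by
        rw [Finset.sum_fiberwise' Finset.univ symOf
          (fun m => (((m : Multiset α)).map u).prod * (((m : Multiset α)).map v).prod)]
    _ = _ := by
        refine Finset.sum_congr rfl fun m _ => ?_
        rw [Finset.sum_const, nsmul_eq_mul]

/-- For every prime `p` and `d ≥ 1`, the minrank of `G₂(d, p)` over `F_p` is at least
`n / (C(d + p - 2, p - 1) + 1)`, where `n` is the number of self-orthogonal vectors. -/
theorem minrank_selfOrthoGraph_ge (p : ℕ) [Fact p.Prime] (d : ℕ) (hd : 1 ≤ d) :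
    ((Fintype.card {v : Fin d → ZMod p // ∑ i, v i * v i = 0} : ℝ) /
        (((d + p - 2).choose (p - 1) : ℝ) + 1)) ≤
      (minrank (ZMod p) (selfOrthoGraph d p) : ℝ) := by
  classical
  have hp : 2 ≤ p := (Fact.out : p.Prime).two_le
  set V := {v : Fin d → ZMod p // ∑ i, v i * v i = 0} with hV
  -- obtain a matrix achieving the minrank
  have hne : {r : ℕ | ∃ M : Matrix V V (ZMod p),
      Represents (selfOrthoGraph d p) M ∧ M.rank = r}.Nonempty := by
    refine ⟨(1 : Matrix V V (ZMod p)).rank, 1, ⟨fun v => by simp [Matrix.one_apply], ?_⟩, rfl⟩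
    intro u v huv _
    simp [Matrix.one_apply, huv]
  obtain ⟨M, hM, hrank⟩ := Nat.sInf_mem hne
  have hrank' : M.rank = minrank (ZMod p) (selfOrthoGraph d p) := hrank
  set k := p - 1 with hk
  obtain ⟨c, hc⟩ := sym_expand (α := Fin d) (F := ZMod p) k
  set P : V → Sym (Fin d) k → ZMod p :=
    fun u m => (((m : Multiset (Fin d))).map u.1).prod with hP
  -- the key matrix identity
  set S : Matrix V V (ZMod p) :=
    M + ∑ m : Sym (Fin d) k,
      Matrix.diagonal (fun u : V => -(c m * P u m)) * M * Matrix.diagonal (fun v : V => P v m)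
    with hS
  have hSentry : ∀ u v : V, S u v = M u v * (1 - (∑ i, u.1 i * v.1 i) ^ k) := by
    intro u v
    rw [hS]
    simp only [Matrix.add_apply, Matrix.sum_apply, Matrix.mul_diagonal, Matrix.diagonal_mul]
    rw [hc u.1 v.1, mul_sub, mul_one, Finset.mul_sum, sub_eq_add_neg,
      ← Finset.sum_neg_distrib]
    congr 1
    exact Finset.sum_congr rfl fun m _ => by ring
  have hdiag : S = Matrix.diagonal (fun u : V => M u u) := by
    ext u v
    by_cases huv : u = v
    · subst huv
      rw [hSentry, Matrix.diagonal_apply_eq]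
      have h0 : (∑ i, u.1 i * u.1 i) = 0 := u.2
      rw [h0, zero_pow (by omega : k ≠ 0), sub_zero, mul_one]
    · rw [hSentry, Matrix.diagonal_apply_ne _ huv]
      by_cases hip : (∑ i, u.1 i * v.1 i) = 0
      · have : ¬ (selfOrthoGraph d p).Adj u v := by
          intro h
          exact (show u ≠ v ∧ ∑ i, u.1 i * v.1 i ≠ 0 from h).2 hip
        rw [hM.2 u v huv this, zero_mul]
      · have h1 : (∑ i, u.1 i * v.1 i) ^ k = 1 := ZMod.pow_card_sub_one_eq_one hip
        rw [h1, sub_self, mul_zero]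
  -- rank computations
  have hrankS : S.rank = Fintype.card V := by
    rw [hdiag, Matrix.rank_diagonal]
    exact Fintype.card_congr (Equiv.subtypeUnivEquiv fun u => hM.1 u)
  have hrankS_le : S.rank ≤ M.rank + Fintype.card (Sym (Fin d) k) * M.rank := by
    rw [hS]
    refine (matrix_rank_add_le _ _).trans ?_
    gcongr
    refine (matrix_rank_sum_le _ _).trans ?_
    calc ∑ m : Sym (Fin d) k,
        (Matrix.diagonal (fun u : V => -(c m * P u m)) * M
          * Matrix.diagonal (fun v : V => P v m)).rank
        ≤ ∑ _m : Sym (Fin d) k, M.rank := by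
          refine Finset.sum_le_sum fun m _ => ?_
          exact (Matrix.rank_mul_le_left _ _).trans (Matrix.rank_mul_le_right _ _)
      _ = Fintype.card (Sym (Fin d) k) * M.rank := by
          rw [Finset.sum_const, smul_eq_mul, Finset.card_univ]
  have hsymcard : Fintype.card (Sym (Fin d) k) = (d + p - 2).choose (p - 1) := by
    rw [Sym.card_sym_eq_choose, Fintype.card_fin]
    congr 1
    omega
  have hnat : Fintype.card V ≤ ((d + p - 2).choose (p - 1) + 1) * M.rank := by
    calc Fintype.card V = S.rank := hrankS.symm
      _ ≤ M.rank + Fintype.card (Sym (Fin d) k) * M.rank := hrankS_le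
      _ = ((d + p - 2).choose (p - 1) + 1) * M.rank := by rw [hsymcard]; ring
  -- conclude over ℝ
  have hpos : (0 : ℝ) < ((d + p - 2).choose (p - 1) : ℝ) + 1 := by positivity
  rw [div_le_iff₀ hpos]
  have : (Fintype.card V : ℝ) ≤ (((d + p - 2).choose (p - 1) : ℝ) + 1) * (M.rank : ℝ) := by
    exact_mod_cast hnat
  rw [← hrank']
  linarith [this]
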